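/- If G is a finite simple graph with minimum degree δ(G) ≥ |V(G)|/3, then G has a path factor. -/

import Mathlib

open SimpleGraph

/-- A spanning subgraph each of whose components is a path of order at least 2. -/
def SimpleGraph.Subgraph.IsPathFactor {V : Type*} {G : SimpleGraph V} (F : G.Subgraph) : Prop :=
  F.verts = Set.univ ∧
    ∀ c : F.coe.ConnectedComponent,
      ∃ k : ℕ, 2 ≤ k ∧ Nonempty (F.coe.induce c.supp ≃g pathGraph k)

/-- `G` has a path factor. -/
def SimpleGraph.HasPathFactor {V : Type*} (G : SimpleGraph V) : Prop :=
  ∃ F : G.Subgraph, F.IsPathFactor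

/-- A spanning subgraph each of whose components is isomorphic to `P₂` or `P₃`. -/
def SimpleGraph.Subgraph.IsP2P3Factor {V : Type*} {G : SimpleGraph V} (F : G.Subgraph) : Prop :=
  F.verts = Set.univ ∧
    ∀ c : F.coe.ConnectedComponent,
      ∃ k : ℕ, (k = 2 ∨ k = 3) ∧ Nonempty (F.coe.induce c.supp ≃g pathGraph k)

/-- The number of isolated vertices of `G − S`. -/
noncomputable def SimpleGraph.numIsolatedOutside {V : Type*} (G : SimpleGraph V) (S : Set V) : ℕ :=
  Nat.card {v : V | v ∉ S ∧ ∀ w, G.Adj v w → w ∈ S}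

/-- The number of connected components of `G − S`. -/
noncomputable def SimpleGraph.numComponentsOutside {V : Type*} (G : SimpleGraph V) (S : Set V) : ℕ :=
  Nat.card (G.induce Sᶜ).ConnectedComponent

/-- `G` is 1-tough: any cut set `S` satisfies `|S| ≥ c(G − S)`. -/
def SimpleGraph.IsOneTough {V : Type*} [Fintype V] (G : SimpleGraph V) : Prop :=
  ∀ S : Finset V, 2 ≤ G.numComponentsOutside ↑S → G.numComponentsOutside ↑S ≤ S.card

/-- `G` is traceable: it has a Hamiltonian path. -/
def SimpleGraph.Traceable {V : Type*} [DecidableEq V] (G : SimpleGraph V) : Prop :=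
  ∃ (a b : V) (p : G.Walk a b), p.IsHamiltonian

open Finset
section Helpers
-- lemma 1: list to pathGraph iso
lemma iso_of_list {W : Type*} (H : SimpleGraph W) (l : List W)
    (nd : l.Nodup) (mem : ∀ x, x ∈ l)
    (hadj : ∀ i j : Fin l.length, H.Adj (l.get i) (l.get j) ↔ ((i:ℕ)+1 = j ∨ (j:ℕ)+1 = i)) :
    Nonempty (H ≃g pathGraph l.length) := by
  classical
  let e : Fin l.length ≃ W := nd.getEquivOfForallMemList l mem
  refine ⟨(RelIso.mk e ?_).symm⟩
  intro i j
  have h1 : e i = l.get i := rfl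
  have h2 : e j = l.get j := rfl
  rw [h1, h2, hadj, pathGraph_adj]


lemma walk_const {W β : Type*} {H : SimpleGraph W} (b : W → β)
    (hb : ∀ ⦃v w⦄, H.Adj v w → b v = b w) {v w : W} (p : H.Walk v w) : b v = b w := by
  induction p with
  | nil => rfl
  | cons h _ ih => exact (hb h).trans ih

lemma blocks_lemma {W β : Type*} (H : SimpleGraph W) (b : W → β)
    (hb : ∀ ⦃v w⦄, H.Adj v w → b v = b w)
    (hblock : ∀ v : W, ∃ l : List W, 2 ≤ l.length ∧ l.Nodup ∧ (∀ x, x ∈ l ↔ b x = b v) ∧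
      (∀ i j : Fin l.length, H.Adj (l.get i) (l.get j) ↔ ((i:ℕ)+1 = j ∨ (j:ℕ)+1 = i))) :
    ∀ c : H.ConnectedComponent, ∃ k, 2 ≤ k ∧ Nonempty (H.induce c.supp ≃g pathGraph k) := by
  intro c
  obtain ⟨v, hv⟩ := c.exists_rep
  obtain ⟨l, hlen, nd, hmem, hadj⟩ := hblock v
  have h0 : 0 < l.length := by omega
  have hreach : ∀ i : Fin l.length, H.Reachable (l.get i) (l.get ⟨0, h0⟩) := by
    rintro ⟨i, hi⟩
    induction i with
    | zero => exact SimpleGraph.Reachable.refl _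
    | succ n ih =>
      have hn : n < l.length := by omega
      have hA : H.Adj (l.get ⟨n, hn⟩) (l.get ⟨n+1, hi⟩) :=
        (hadj ⟨n, hn⟩ ⟨n+1, hi⟩).2 (Or.inl rfl)
      exact (hA.symm.reachable).trans (ih hn)
  have hsupp : c.supp = {x | x ∈ l} := by
    ext x
    rw [SimpleGraph.ConnectedComponent.mem_supp_iff, ← hv]
    rw [show Quot.mk H.Reachable v = H.connectedComponentMk v from rfl,
      SimpleGraph.ConnectedComponent.eq]
    constructor
    · intro hr
      exact Set.mem_setOf_eq ▸ (hmem x).2 (hr.elim (fun p => walk_const b hb p))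
    · intro hx
      have hvmem : v ∈ l := (hmem v).2 rfl
      obtain ⟨i, hi⟩ := List.mem_iff_get.1 hx
      obtain ⟨j, hj⟩ := List.mem_iff_get.1 hvmem
      rw [← hi, ← hj]
      exact (hreach i).trans (hreach j).symm
  have hsub : ∀ a ∈ l, a ∈ c.supp := by intro a ha; rw [hsupp]; exact ha
  set l' : List ↥(c.supp) := l.pmap (fun x hx => (⟨x, hx⟩ : ↥(c.supp))) hsub with hl'
  have hlen' : l'.length = l.length := List.length_pmap
  have hget : ∀ i : Fin l'.length, (l'.get i : W) = l.get ⟨i, by omega⟩ := by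
    intro i; simp [hl', List.getElem_pmap]
  refine ⟨l'.length, by omega, ?_⟩
  apply iso_of_list
  · exact (nd.pmap (fun a ha b hb e => congrArg Subtype.val e))
  · rintro ⟨x, hx⟩
    rw [hsupp] at hx
    exact List.mem_pmap.2 ⟨x, hx, rfl⟩
  · intro i j
    have : (H.induce c.supp).Adj (l'.get i) (l'.get j) ↔ H.Adj (l'.get i : W) (l'.get j : W) := by
      simp [SimpleGraph.comap]
    rw [this, hget i, hget j, hadj]

lemma sym2_exists' {α : Type*} (e : Sym2 α) : ∃ x y, e = s(x, y) :=
  Sym2.ind (fun x y => ⟨x, y, rfl⟩) e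


end Helpers

theorem stmt2 {V : Type*} [Fintype V] (G : SimpleGraph V) [DecidableRel G.Adj]
    (h : Fintype.card V ≤ 3 * G.minDegree) :
    G.HasPathFactor := by
  rcases isEmpty_or_nonempty V with hE | hne
  · refine ⟨⊤, by simp, fun c => ?_⟩
    obtain ⟨v, -⟩ := c.exists_rep
    exact (hE.elim v.1)
  · classical
    set n := Fintype.card V with hn
    set δ := G.minDegree with hδ
    have hδ1 : 1 ≤ δ := by
      rcases Nat.eq_zero_or_pos δ with h0 | h1
      · rw [h0] at h; simp at h
        have := Fintype.card_pos (α := V)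
        omega
      · exact h1
    -- maximum matching
    have hS : (Finset.univ.filter (fun M : Finset (Sym2 V) =>
        (∀ e ∈ M, e ∈ G.edgeFinset) ∧
        ∀ e ∈ M, ∀ e' ∈ M, e ≠ e' → ∀ v : V, v ∈ e → v ∉ e')).Nonempty :=
      ⟨∅, by simp⟩
    obtain ⟨M, hMmem, hMmax⟩ := Finset.exists_max_image _ Finset.card hS
    rw [Finset.mem_filter] at hMmem
    obtain ⟨-, hM1, hM2⟩ := hMmem
    have hMmax' : ∀ M' : Finset (Sym2 V), (∀ e ∈ M', e ∈ G.edgeFinset) →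
        (∀ e ∈ M', ∀ e' ∈ M', e ≠ e' → ∀ v : V, v ∈ e → v ∉ e') → M'.card ≤ M.card := by
      intro M' h1 h2
      exact hMmax M' (Finset.mem_filter.2 ⟨Finset.mem_univ _, h1, h2⟩)
    set matched : Set V := {v | ∃ e ∈ M, v ∈ e} with hmatched
    have uniqueEdge : ∀ {v : V} {e e' : Sym2 V}, e ∈ M → e' ∈ M → v ∈ e → v ∈ e' → e = e' := by
      intro v e e' he he' hv hv'
      by_contra hne'
      exact hM2 e he e' he' hne' v hv hv'
    have key2 : ∀ u w : V, u ∉ matched → w ∉ matched → ¬ G.Adj u w := by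
      intro u w hu hw hadj
      have huw : u ≠ w := hadj.ne
      have hnotmem : s(u, w) ∉ M := fun hmem => hu ⟨s(u, w), hmem, Sym2.mem_mk_left u w⟩
      have hcard : (insert s(u, w) M).card = M.card + 1 := Finset.card_insert_of_notMem hnotmem
      have hle := hMmax' (insert s(u, w) M) ?_ ?_
      · omega
      · intro e he
        rcases Finset.mem_insert.1 he with rfl | he
        · rwa [SimpleGraph.mem_edgeFinset, SimpleGraph.mem_edgeSet]
        · exact hM1 e he
      · intro e he e' he' hne' v hv hv'
        rcases Finset.mem_insert.1 he with he0 | hin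
        · rcases Finset.mem_insert.1 he' with he0' | hin'
          · exact hne' (he0.trans he0'.symm)
          · subst he0
            rcases Sym2.mem_iff.1 hv with rfl | rfl
            · exact hu ⟨e', hin', hv'⟩
            · exact hw ⟨e', hin', hv'⟩
        · rcases Finset.mem_insert.1 he' with he0' | hin'
          · subst he0'
            rcases Sym2.mem_iff.1 hv' with rfl | rfl
            · exact hu ⟨e, hin, hv⟩
            · exact hw ⟨e, hin, hv⟩
          · exact hM2 e hin e' hin' hne' v hv hv'
    set Mv : Finset V := M.biUnion (fun e => Finset.univ.filter (· ∈ e)) with hMv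
    have hMvmem : ∀ v : V, v ∈ Mv ↔ v ∈ matched := by
      intro v; simp [hMv, hmatched]
    have hedge2 : ∀ e ∈ M, (Finset.univ.filter (· ∈ e)).card = 2 := by
      intro e he
      have hd : ¬ e.IsDiag := SimpleGraph.not_isDiag_of_mem_edgeSet G (SimpleGraph.mem_edgeFinset.1 (hM1 e he))
      obtain ⟨x, y, rfl⟩ := sym2_exists' e
      have hxy : x ≠ y := by simpa using hd
      have : Finset.univ.filter (· ∈ s(x, y)) = {x, y} := by
        ext z; simp [Sym2.mem_iff]
      rw [this, Finset.card_insert_of_notMem (by simpa using hxy), Finset.card_singleton]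
    have hdisj : ∀ e ∈ M, ∀ e' ∈ M, e ≠ e' →
        Disjoint (Finset.univ.filter (· ∈ e)) (Finset.univ.filter (· ∈ e')) := by
      intro e he e' he' hne
      rw [Finset.disjoint_left]
      intro a ha ha'
      simp only [Finset.mem_filter] at ha ha'
      exact hM2 e he e' he' hne a ha.2 ha'.2
    have hMvcard : Mv.card = 2 * M.card := by
      rw [hMv, Finset.card_biUnion hdisj, Finset.sum_congr rfl hedge2]
      simp [mul_comm]
    set U : Finset V := Finset.univ.filter (fun v => v ∉ matched) with hU
    have hUMv : U.card + Mv.card = n := by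
      have : Mv = Finset.univ.filter (fun v => v ∈ matched) := by
        ext v; simp [hMvmem v]
      rw [this, hU, hn]
      have := Finset.card_filter_add_card_filter_not
        (s := Finset.univ) (p := fun v : V => v ∈ matched)
      simp only [Finset.card_univ] at this
      rw [add_comm]
      convert this using 3
    have filterEq : ∀ x y : V, x ≠ y → Finset.univ.filter (· ∈ s(x, y)) = {x, y} := by
      intro x y hxy; ext z; simp [Sym2.mem_iff]
    have hmain : ∀ u v : V, u ∉ matched → v ∉ matched → u ≠ v → δ ≤ M.card := by
      intro u v hu hv huv
      by_contra hlt
      push_neg at hlt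
      have hNu : G.neighborFinset u ⊆ Mv := by
        intro w hw
        rw [SimpleGraph.mem_neighborFinset] at hw
        rw [hMvmem]
        by_contra hwm
        exact key2 u w hu hwm hw
      have hNv : G.neighborFinset v ⊆ Mv := by
        intro w hw
        rw [SimpleGraph.mem_neighborFinset] at hw
        rw [hMvmem]
        by_contra hwm
        exact key2 v w hv hwm hw
      have hswap : ∀ x y : V, s(x, y) ∈ M → G.Adj u x → G.Adj v y → False := by
        intro x y hexy hux hvy
        have hxy : x ≠ y := by
          have := SimpleGraph.not_isDiag_of_mem_edgeSet G
            (SimpleGraph.mem_edgeFinset.1 (hM1 _ hexy))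
          simpa using this
        have hxm : x ∈ matched := ⟨s(x, y), hexy, Sym2.mem_mk_left x y⟩
        have hym : y ∈ matched := ⟨s(x, y), hexy, Sym2.mem_mk_right x y⟩
        have hux' : u ≠ x := fun hh => hu (hh ▸ hxm)
        have huy : u ≠ y := fun hh => hu (hh ▸ hym)
        have hvx : v ≠ x := fun hh => hv (hh ▸ hxm)
        have hvy' : v ≠ y := fun hh => hv (hh ▸ hym)
        have hxonly : ∀ e ∈ M, x ∈ e → e = s(x, y) := fun e he hxe =>
          uniqueEdge he hexy hxe (Sym2.mem_mk_left x y)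
        have hyonly : ∀ e ∈ M, y ∈ e → e = s(x, y) := fun e he hye =>
          uniqueEdge he hexy hye (Sym2.mem_mk_right x y)
        have hunot : ∀ e ∈ M, u ∉ e := fun e he hm => hu ⟨e, he, hm⟩
        have hvnot : ∀ e ∈ M, v ∉ e := fun e he hm => hv ⟨e, he, hm⟩
        set M' := insert s(u, x) (insert s(v, y) (M.erase s(x, y))) with hM'
        have hc1 : s(v, y) ∉ M.erase s(x, y) := fun hmem =>
          hvnot _ (Finset.mem_of_mem_erase hmem) (Sym2.mem_mk_left v y)
        have hc2 : s(u, x) ∉ insert s(v, y) (M.erase s(x, y)) := by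
          intro hmem
          rcases Finset.mem_insert.1 hmem with heq | hmem
          · rw [Sym2.eq_iff] at heq
            rcases heq with ⟨h1, h2⟩ | ⟨h1, h2⟩
            · exact huv h1
            · exact huy h1
          · exact hunot _ (Finset.mem_of_mem_erase hmem) (Sym2.mem_mk_left u x)
        have hcard : M'.card = M.card + 1 := by
          rw [hM', Finset.card_insert_of_notMem hc2, Finset.card_insert_of_notMem hc1,
            Finset.card_erase_of_mem hexy]
          have : 1 ≤ M.card := Finset.card_pos.2 ⟨_, hexy⟩
          omega
        -- membership lemma for M'
        have hmemM' : ∀ e, e ∈ M' ↔ e = s(u, x) ∨ e = s(v, y) ∨ (e ∈ M ∧ e ≠ s(x, y)) := by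
          intro e
          simp [hM', Finset.mem_insert, Finset.mem_erase, and_comm]
        have hle := hMmax' M' ?_ ?_
        · omega
        · intro e he
          rcases (hmemM' e).1 he with rfl | rfl | ⟨he, -⟩
          · rwa [SimpleGraph.mem_edgeFinset, SimpleGraph.mem_edgeSet]
          · rwa [SimpleGraph.mem_edgeFinset, SimpleGraph.mem_edgeSet]
          · exact hM1 e he
        · intro e he e' he' hnee v' hv1 hv2
          have hnew1 : ∀ e'' ∈ M, e'' ≠ s(x, y) → v' ∈ s(u, x) → v' ∈ e'' → False := by
            intro e'' he'' hne'' hm1 hm2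
            rcases Sym2.mem_iff.1 hm1 with rfl | rfl
            · exact hunot _ he'' hm2
            · exact hne'' (hxonly _ he'' hm2)
          have hnew2 : ∀ e'' ∈ M, e'' ≠ s(x, y) → v' ∈ s(v, y) → v' ∈ e'' → False := by
            intro e'' he'' hne'' hm1 hm2
            rcases Sym2.mem_iff.1 hm1 with rfl | rfl
            · exact hvnot _ he'' hm2
            · exact hne'' (hyonly _ he'' hm2)
          have hnew12 : v' ∈ s(u, x) → v' ∈ s(v, y) → False := by
            intro hm1 hm2
            rcases Sym2.mem_iff.1 hm1 with rfl | rfl <;> rcases Sym2.mem_iff.1 hm2 with h2 | h2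
            · exact huv h2
            · exact huy h2
            · exact hvx h2.symm
            · exact hxy h2
          rcases (hmemM' e).1 he with rfl | rfl | ⟨heM, hneM⟩ <;>
            rcases (hmemM' e').1 he' with h' | h' | h'
          · exact absurd h'.symm hnee
          · subst h'; exact hnew12 hv1 hv2
          · exact hnew1 e' h'.1 h'.2 hv1 hv2
          · subst h'; exact hnew12 hv2 hv1
          · exact absurd h'.symm hnee
          · exact hnew2 e' h'.1 h'.2 hv1 hv2
          · subst h'; exact hnew1 e heM hneM hv2 hv1
          · subst h'; exact hnew2 e heM hneM hv2 hv1
          · exact hM2 e heM e' h'.1 hnee v' hv1 hv2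
      -- counting
      have hbi : ∀ w : V, G.neighborFinset w ⊆ Mv →
          G.neighborFinset w = M.biUnion (fun e => G.neighborFinset w ∩ Finset.univ.filter (· ∈ e)) := by
        intro w hsub
        ext z
        simp only [Finset.mem_biUnion, Finset.mem_inter, Finset.mem_filter, Finset.mem_univ,
          true_and]
        constructor
        · intro hz
          obtain ⟨e, he, hze⟩ := (hMvmem z).1 (hsub hz)
          exact ⟨e, he, hz, hze⟩
        · rintro ⟨e, he, hz, -⟩
          exact hz
      have hsum : ∀ w : V, G.neighborFinset w ⊆ Mv →
          ∑ e ∈ M, (G.neighborFinset w ∩ Finset.univ.filter (· ∈ e)).card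
            = (G.neighborFinset w).card := by
        intro w hsub
        rw [← Finset.card_biUnion, ← hbi w hsub]
        intro e he e' he' hne
        exact (hdisj e he e' he' hne).mono (Finset.inter_subset_right) (Finset.inter_subset_right)
      have hdegu : δ ≤ (G.neighborFinset u).card := by
        rw [SimpleGraph.card_neighborFinset_eq_degree]; exact G.minDegree_le_degree u
      have hdegv : δ ≤ (G.neighborFinset v).card := by
        rw [SimpleGraph.card_neighborFinset_eq_degree]; exact G.minDegree_le_degree v
      have hbig : ∃ e ∈ M, 3 ≤ (G.neighborFinset u ∩ Finset.univ.filter (· ∈ e)).card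
          + (G.neighborFinset v ∩ Finset.univ.filter (· ∈ e)).card := by
        by_contra hsmall
        push_neg at hsmall
        have hle2 : ∀ e ∈ M, (G.neighborFinset u ∩ Finset.univ.filter (· ∈ e)).card
            + (G.neighborFinset v ∩ Finset.univ.filter (· ∈ e)).card ≤ 2 := by
          intro e he; have := hsmall e he; omega
        have := Finset.sum_le_sum hle2
        rw [Finset.sum_add_distrib, hsum u hNu, hsum v hNv, Finset.sum_const, smul_eq_mul] at this
        omega
      obtain ⟨e, he, h3⟩ := hbig
      obtain ⟨x, y, rfl⟩ := sym2_exists' e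
      have hxy : x ≠ y := by
        have := SimpleGraph.not_isDiag_of_mem_edgeSet G
          (SimpleGraph.mem_edgeFinset.1 (hM1 _ he))
        simpa using this
      rw [filterEq x y hxy] at h3
      have hcard2 : ({x, y} : Finset V).card = 2 := by
        rw [Finset.card_insert_of_notMem (by simpa using hxy), Finset.card_singleton]
      have hsubu : G.neighborFinset u ∩ {x, y} ⊆ {x, y} := Finset.inter_subset_right
      have hsubv : G.neighborFinset v ∩ {x, y} ⊆ {x, y} := Finset.inter_subset_right
      have hbu : (G.neighborFinset u ∩ {x, y}).card ≤ 2 := hcard2 ▸ Finset.card_le_card hsubu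
      have hbv : (G.neighborFinset v ∩ {x, y}).card ≤ 2 := hcard2 ▸ Finset.card_le_card hsubv
      have hfull : ∀ w : V, 2 ≤ (G.neighborFinset w ∩ {x, y}).card →
          G.Adj w x ∧ G.Adj w y := by
        intro w hw
        have heq : G.neighborFinset w ∩ {x, y} = {x, y} :=
          Finset.eq_of_subset_of_card_le Finset.inter_subset_right (hcard2 ▸ hw)
        constructor
        · have hx : x ∈ G.neighborFinset w ∩ {x, y} := by rw [heq]; simp
          exact (SimpleGraph.mem_neighborFinset _ _ _).1 (Finset.mem_inter.1 hx).1
        · have hy : y ∈ G.neighborFinset w ∩ {x, y} := by rw [heq]; simp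
          exact (SimpleGraph.mem_neighborFinset _ _ _).1 (Finset.mem_inter.1 hy).1
      have hone : ∀ w : V, 1 ≤ (G.neighborFinset w ∩ {x, y}).card →
          G.Adj w x ∨ G.Adj w y := by
        intro w hw
        obtain ⟨z, hz⟩ := Finset.card_pos.1 hw
        rcases Finset.mem_inter.1 hz with ⟨hz1, hz2⟩
        rw [SimpleGraph.mem_neighborFinset] at hz1
        rcases Finset.mem_insert.1 hz2 with rfl | hz2
        · exact Or.inl hz1
        · rw [Finset.mem_singleton] at hz2; subst hz2; exact Or.inr hz1
      have hsyx : s(y, x) ∈ M := by rwa [Sym2.eq_swap]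
      by_cases h2u : 2 ≤ (G.neighborFinset u ∩ {x, y}).card
      · obtain ⟨hux, huy⟩ := hfull u h2u
        rcases hone v (by omega) with hvx | hvy
        · exact hswap y x hsyx huy hvx
        · exact hswap x y he hux hvy
      · have h2v : 2 ≤ (G.neighborFinset v ∩ {x, y}).card := by omega
        obtain ⟨hvx, hvy⟩ := hfull v h2v
        rcases hone u (by omega) with hux | huy
        · exact hswap x y he hux hvy
        · exact hswap y x hsyx huy hvx
    have hUδ : U.card ≤ δ := by
      by_cases h1 : U.card ≤ 1
      · omega
      · push_neg at h1
        obtain ⟨u, hu, v, hv, huv⟩ := Finset.one_lt_card.1 h1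
        rw [hU, Finset.mem_filter] at hu hv
        have := hmain u v hu.2 hv.2 huv
        omega
    have hall : ∀ s : Finset {v : V // v ∉ matched},
        s.card ≤ (s.biUnion (fun u => G.neighborFinset u.1)).card := by
      intro s
      rcases s.eq_empty_or_nonempty with rfl | ⟨u, hus⟩
      · simp
      · have h1 : s.card ≤ U.card := by
          have h0 : s.card ≤ Fintype.card {v : V // v ∉ matched} := Finset.card_le_univ s
          rwa [Fintype.card_subtype] at h0
        have h2 : G.neighborFinset u.1 ⊆ s.biUnion (fun u => G.neighborFinset u.1) :=
          Finset.subset_biUnion_of_mem (fun u : {v : V // v ∉ matched} => G.neighborFinset u.1) hus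
        have h3 : δ ≤ (G.neighborFinset u.1).card := by
          rw [SimpleGraph.card_neighborFinset_eq_degree]; exact G.minDegree_le_degree _
        have := Finset.card_le_card h2
        omega
    obtain ⟨f, hfinj, hfmem⟩ := (Finset.all_card_le_biUnion_card_iff_exists_injective _).1 hall
    set fext : V → V := fun v => if hv : v ∉ matched then f ⟨v, hv⟩ else v with hfext
    have hfadj : ∀ v, v ∉ matched → G.Adj v (fext v) := by
      intro v hv
      have h0 := hfmem ⟨v, hv⟩
      rw [SimpleGraph.mem_neighborFinset] at h0
      rw [hfext]
      simpa [dif_pos hv] using h0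
    have hfmatched : ∀ v, v ∉ matched → fext v ∈ matched := by
      intro v hv; by_contra hm; exact key2 v (fext v) hv hm (hfadj v hv)
    have hfinj' : ∀ u v, u ∉ matched → v ∉ matched → fext u = fext v → u = v := by
      intro u v hu hv heq
      rw [hfext] at heq
      simp only [dif_pos hu, dif_pos hv] at heq
      exact congrArg Subtype.val (hfinj heq)
    set eOf : V → Sym2 V := fun v =>
      if hv : v ∈ matched then (show ∃ e, e ∈ M ∧ v ∈ e from hv).choose else s(v, v)
      with heOfdef
    have heOf : ∀ v, v ∈ matched → eOf v ∈ M ∧ v ∈ eOf v := by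
      intro v hv
      rw [heOfdef]
      simp only [dif_pos hv]
      exact (show ∃ e, e ∈ M ∧ v ∈ e from hv).choose_spec
    have heOfu : ∀ v e, v ∈ matched → e ∈ M → v ∈ e → eOf v = e := by
      intro v e hv he hve
      exact uniqueEdge (heOf v hv).1 he (heOf v hv).2 hve
    set b : V → Sym2 V := fun v => if v ∈ matched then eOf v else eOf (fext v) with hbdef
    obtain ⟨F, hFverts, hFadj⟩ : ∃ F : G.Subgraph, F.verts = Set.univ ∧
        (∀ v w : V, F.Adj v w ↔
          (s(v, w) ∈ M ∨ (v ∉ matched ∧ fext v = w) ∨ (w ∉ matched ∧ fext w = v))) := by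
      refine ⟨{
        verts := Set.univ
        Adj := fun v w => s(v, w) ∈ M ∨ (v ∉ matched ∧ fext v = w) ∨ (w ∉ matched ∧ fext w = v)
        adj_sub := by
          rintro v w (hm | ⟨hv, rfl⟩ | ⟨hw, rfl⟩)
          · exact (SimpleGraph.mem_edgeSet G).1 (SimpleGraph.mem_edgeFinset.1 (hM1 _ hm))
          · exact hfadj v hv
          · exact (hfadj w hw).symm
        edge_vert := fun _ => Set.mem_univ _
        symm := by
          constructor
          rintro v w (hm | ⟨hv, rfl⟩ | ⟨hw, rfl⟩)
          · left; rwa [Sym2.eq_swap]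
          · right; right; exact ⟨hv, rfl⟩
          · right; left; exact ⟨hw, rfl⟩ }, rfl, fun _ _ => Iff.rfl⟩
    have hbm : ∀ v, v ∈ matched → b v = eOf v := by
      intro v hv; rw [hbdef]; simp [if_pos hv]
    have hbum : ∀ v, v ∉ matched → b v = eOf (fext v) := by
      intro v hv; rw [hbdef]; simp [if_neg hv]
    have hbF : ∀ v w : V, F.Adj v w → b v = b w := by
      intro v w hadj
      rcases (hFadj v w).1 hadj with hm | ⟨hv, rfl⟩ | ⟨hw, rfl⟩
      · have hvm : v ∈ matched := ⟨_, hm, Sym2.mem_mk_left _ _⟩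
        have hwm : w ∈ matched := ⟨_, hm, Sym2.mem_mk_right _ _⟩
        rw [hbm v hvm, hbm w hwm, heOfu v _ hvm hm (Sym2.mem_mk_left _ _),
          heOfu w _ hwm hm (Sym2.mem_mk_right _ _)]
      · rw [hbum v hv, hbm (fext v) (hfmatched v hv)]
      · rw [hbum w hw, hbm (fext w) (hfmatched w hw)]
    have hne_um : ∀ z t : V, z ∉ matched → t ∈ matched → z ≠ t := by
      rintro z t hz ht rfl; exact hz ht
    have hnIrr : ∀ z : V, ¬ F.Adj z z := fun z hzz => G.loopless.irrefl z (F.adj_sub hzz)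
    have hnAA : ∀ z z' : V, z ∉ matched → z' ∉ matched → ¬ F.Adj z z' := by
      intro z z' hz hz' hadj
      rcases (hFadj z z').1 hadj with hm | ⟨hv, hfz⟩ | ⟨hw, hfz⟩
      · exact hz ⟨_, hm, Sym2.mem_mk_left _ _⟩
      · exact hz' (hfz ▸ hfmatched z hz)
      · exact hz (hfz ▸ hfmatched z' hz')
    have hblockV : ∀ v : V, ∃ l : List V, 2 ≤ l.length ∧ l.Nodup ∧
        (∀ z, z ∈ l ↔ b z = b v) ∧
        (∀ i j : Fin l.length, F.Adj (l.get i) (l.get j) ↔ ((i:ℕ)+1 = (j:ℕ) ∨ (j:ℕ)+1 = (i:ℕ))) := by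
      intro v
      set w0 : V := if v ∈ matched then v else fext v with hw0
      have hw0m : w0 ∈ matched := by
        rw [hw0]; split
        · assumption
        · exact hfmatched v (by assumption)
      have hbv : b v = eOf w0 := by
        rw [hbdef, hw0]
        by_cases hvm : v ∈ matched <;> simp [hvm]
      obtain ⟨x, y, hxyE⟩ := sym2_exists' (eOf w0)
      have heM : s(x, y) ∈ M := hxyE ▸ (heOf w0 hw0m).1
      have hxy : x ≠ y := by
        have := SimpleGraph.not_isDiag_of_mem_edgeSet G
          (SimpleGraph.mem_edgeFinset.1 (hM1 _ heM))
        simpa using this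
      have hxm : x ∈ matched := ⟨_, heM, Sym2.mem_mk_left _ _⟩
      have hym : y ∈ matched := ⟨_, heM, Sym2.mem_mk_right _ _⟩
      have hbx : b x = eOf w0 := by
        rw [hbm x hxm, heOfu x _ hxm heM (Sym2.mem_mk_left _ _), hxyE]
      have hby : b y = eOf w0 := by
        rw [hbm y hym, heOfu y _ hym heM (Sym2.mem_mk_right _ _), hxyE]
      have hatt : ∀ z, z ∉ matched → (b z = eOf w0 ↔ (fext z = x ∨ fext z = y)) := by
        intro z hz
        rw [hbum z hz]
        constructor
        · intro hzz
          have hmem : fext z ∈ eOf w0 := hzz ▸ (heOf (fext z) (hfmatched z hz)).2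
          rw [hxyE] at hmem
          exact Sym2.mem_iff.1 hmem
        · rintro (hfz | hfz)
          · rw [heOfu (fext z) s(x, y) (hfmatched z hz) heM (by rw [hfz]; exact Sym2.mem_mk_left _ _), hxyE]
          · rw [heOfu (fext z) s(x, y) (hfmatched z hz) heM (by rw [hfz]; exact Sym2.mem_mk_right _ _), hxyE]
      have hAxy : F.Adj x y := (hFadj x y).2 (Or.inl heM)
      have hAyx : F.Adj y x := (hFadj y x).2 (Or.inl (by rwa [Sym2.eq_swap]))
      have hAtt1 : ∀ z t, z ∉ matched → fext z = t → F.Adj z t :=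
        fun z t hz hfz => (hFadj z t).2 (Or.inr (Or.inl ⟨hz, hfz⟩))
      have hAtt2 : ∀ z t, z ∉ matched → fext z = t → F.Adj t z :=
        fun z t hz hfz => (hFadj t z).2 (Or.inr (Or.inr ⟨hz, hfz⟩))
      have hnAtt1 : ∀ z t t', z ∉ matched → fext z = t → t ≠ t' → t' ∈ matched → ¬ F.Adj z t' := by
        intro z t t' hz hfz hne ht' hadj
        rcases (hFadj z t').1 hadj with hm | ⟨h1, h2⟩ | ⟨h1, h2⟩
        · exact hz ⟨_, hm, Sym2.mem_mk_left _ _⟩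
        · exact hne (hfz ▸ h2.symm ▸ rfl)
        · exact h1 ht'
      have hnAtt2 : ∀ z t t', z ∉ matched → fext z = t → t ≠ t' → t' ∈ matched → ¬ F.Adj t' z := by
        intro z t t' hz hfz hne ht' hadj
        rcases (hFadj t' z).1 hadj with hm | ⟨h1, h2⟩ | ⟨h1, h2⟩
        · exact hz ⟨_, hm, Sym2.mem_mk_right _ _⟩
        · exact h1 ht'
        · exact hne (hfz ▸ h2.symm ▸ rfl)
      by_cases hx : ∃ z, z ∉ matched ∧ fext z = x <;>
        by_cases hy : ∃ z, z ∉ matched ∧ fext z = y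
      · -- both attachers
        obtain ⟨ux, hux, hfux⟩ := hx
        obtain ⟨uy, huy, hfuy⟩ := hy
        have huxx : ux ≠ x := hne_um ux x hux hxm
        have huxy : ux ≠ y := hne_um ux y hux hym
        have huyx : uy ≠ x := hne_um uy x huy hxm
        have huyy : uy ≠ y := hne_um uy y huy hym
        have huxuy : ux ≠ uy := fun hh => hxy (by rw [← hfux, ← hfuy, hh])
        refine ⟨[ux, x, y, uy], by norm_num, ?_, ?_, ?_⟩
        · simp [huxx, huxy, huxuy, hxy, huyx.symm, huyy.symm, List.nodup_cons]
        · intro z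
          rw [hbv]
          constructor
          · intro hz
            rcases List.mem_cons.1 hz with rfl | hz
            · exact (hatt z hux).2 (Or.inl hfux)
            rcases List.mem_cons.1 hz with rfl | hz
            · exact hbx
            rcases List.mem_cons.1 hz with rfl | hz
            · exact hby
            rcases List.mem_cons.1 hz with rfl | hz
            · exact (hatt z huy).2 (Or.inr hfuy)
            · simp at hz
          · intro hbz
            by_cases hzm : z ∈ matched
            · have h1 : z ∈ eOf w0 := (hbm z hzm ▸ hbz) ▸ (heOf z hzm).2
              rw [hxyE] at h1
              rcases Sym2.mem_iff.1 h1 with rfl | rfl <;> simp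
            · rcases (hatt z hzm).1 hbz with hfz | hfz
              · have : z = ux := hfinj' z ux hzm hux (hfz.trans hfux.symm)
                subst this; simp
              · have : z = uy := hfinj' z uy hzm huy (hfz.trans hfuy.symm)
                subst this; simp
        · intro i j
          fin_cases i <;> fin_cases j <;>
            simp [show ((3:Fin 4):ℕ) = 3 from rfl, hnIrr, hAxy, hAyx,
              hAtt1 ux x hux hfux, hAtt2 ux x hux hfux,
              hAtt1 uy y huy hfuy, hAtt2 uy y huy hfuy,
              hnAtt1 ux x y hux hfux hxy hym, hnAtt2 ux x y hux hfux hxy hym,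
              hnAtt1 uy y x huy hfuy hxy.symm hxm, hnAtt2 uy y x huy hfuy hxy.symm hxm,
              hnAA ux uy hux huy, hnAA uy ux huy hux]
      · -- only x attacher
        obtain ⟨ux, hux, hfux⟩ := hx
        have huxx : ux ≠ x := hne_um ux x hux hxm
        have huxy : ux ≠ y := hne_um ux y hux hym
        refine ⟨[ux, x, y], by norm_num, ?_, ?_, ?_⟩
        · simp [huxx, huxy, hxy]
        · intro z
          rw [hbv]
          constructor
          · intro hz
            rcases List.mem_cons.1 hz with rfl | hz
            · exact (hatt z hux).2 (Or.inl hfux)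
            rcases List.mem_cons.1 hz with rfl | hz
            · exact hbx
            rcases List.mem_cons.1 hz with rfl | hz
            · exact hby
            · simp at hz
          · intro hbz
            by_cases hzm : z ∈ matched
            · have h1 : z ∈ eOf w0 := (hbm z hzm ▸ hbz) ▸ (heOf z hzm).2
              rw [hxyE] at h1
              rcases Sym2.mem_iff.1 h1 with rfl | rfl <;> simp
            · rcases (hatt z hzm).1 hbz with hfz | hfz
              · have : z = ux := hfinj' z ux hzm hux (hfz.trans hfux.symm)
                subst this; simp
              · exact absurd ⟨z, hzm, hfz⟩ hy
        · intro i j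
          fin_cases i <;> fin_cases j <;>
            simp [hnIrr, hAxy, hAyx, hAtt1 ux x hux hfux, hAtt2 ux x hux hfux,
              hnAtt1 ux x y hux hfux hxy hym, hnAtt2 ux x y hux hfux hxy hym]
      · -- only y attacher
        obtain ⟨uy, huy, hfuy⟩ := hy
        have huyx : uy ≠ x := hne_um uy x huy hxm
        have huyy : uy ≠ y := hne_um uy y huy hym
        refine ⟨[x, y, uy], by norm_num, ?_, ?_, ?_⟩
        · simp [hxy, huyx.symm, huyy.symm]
        · intro z
          rw [hbv]
          constructor
          · intro hz
            rcases List.mem_cons.1 hz with rfl | hz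
            · exact hbx
            rcases List.mem_cons.1 hz with rfl | hz
            · exact hby
            rcases List.mem_cons.1 hz with rfl | hz
            · exact (hatt z huy).2 (Or.inr hfuy)
            · simp at hz
          · intro hbz
            by_cases hzm : z ∈ matched
            · have h1 : z ∈ eOf w0 := (hbm z hzm ▸ hbz) ▸ (heOf z hzm).2
              rw [hxyE] at h1
              rcases Sym2.mem_iff.1 h1 with rfl | rfl <;> simp
            · rcases (hatt z hzm).1 hbz with hfz | hfz
              · exact absurd ⟨z, hzm, hfz⟩ hx
              · have : z = uy := hfinj' z uy hzm huy (hfz.trans hfuy.symm)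
                subst this; simp
        · intro i j
          fin_cases i <;> fin_cases j <;>
            simp [hnIrr, hAxy, hAyx, hAtt1 uy y huy hfuy, hAtt2 uy y huy hfuy,
              hnAtt1 uy y x huy hfuy hxy.symm hxm, hnAtt2 uy y x huy hfuy hxy.symm hxm]
      · -- no attachers
        refine ⟨[x, y], by norm_num, ?_, ?_, ?_⟩
        · simp [hxy]
        · intro z
          rw [hbv]
          constructor
          · intro hz
            rcases List.mem_cons.1 hz with rfl | hz
            · exact hbx
            rcases List.mem_cons.1 hz with rfl | hz
            · exact hby
            · simp at hz
          · intro hbz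
            by_cases hzm : z ∈ matched
            · have h1 : z ∈ eOf w0 := (hbm z hzm ▸ hbz) ▸ (heOf z hzm).2
              rw [hxyE] at h1
              rcases Sym2.mem_iff.1 h1 with rfl | rfl <;> simp
            · rcases (hatt z hzm).1 hbz with hfz | hfz
              · exact absurd ⟨z, hzm, hfz⟩ hx
              · exact absurd ⟨z, hzm, hfz⟩ hy
        · intro i j
          fin_cases i <;> fin_cases j <;> simp [hnIrr, hAxy, hAyx]
    refine ⟨F, hFverts, ?_⟩
    apply blocks_lemma F.coe (fun z : ↥F.verts => b z.1)
    · intro z w hadj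
      exact hbF _ _ ((SimpleGraph.Subgraph.coe_adj F z w) ▸ hadj)
    · intro z
      obtain ⟨l, hlen, nd, hmem, hadjl⟩ := hblockV z.1
      have hmemF : ∀ t : V, t ∈ F.verts := fun t => by rw [hFverts]; exact Set.mem_univ t
      refine ⟨l.map (fun t => (⟨t, hmemF t⟩ : ↥F.verts)), by simpa using hlen, ?_, ?_, ?_⟩
      · exact nd.map (fun a b hab => congrArg Subtype.val hab)
      · intro t
        rw [List.mem_map]
        constructor
        · rintro ⟨a, ha, rfl⟩
          exact (hmem a).1 ha
        · intro hbt
          exact ⟨t.1, (hmem t.1).2 hbt, Subtype.ext rfl⟩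
      · intro i j
        have hi : (i : ℕ) < l.length := by simpa using i.2
        have hj : (j : ℕ) < l.length := by simpa using j.2
        have hgi : ((l.map (fun t => (⟨t, hmemF t⟩ : ↥F.verts))).get i).1 = l.get ⟨i, hi⟩ := by
          simp [List.getElem_map]
        have hgj : ((l.map (fun t => (⟨t, hmemF t⟩ : ↥F.verts))).get j).1 = l.get ⟨j, hj⟩ := by
          simp [List.getElem_map]
        rw [SimpleGraph.Subgraph.coe_adj, hgi, hgj]
        exact hadjl ⟨i, hi⟩ ⟨j, hj⟩
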